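/- Let α, β, k > 0 and f as above. For any L, T₀ > 0 with T₀ · f(L/T₀) ≥ A₀ > 0, we have αL + βT₀ ≥ σA₀, where σ = αγ + βγ²/(4kγ - 2) and γ = (4αk + β + √((4αk+β)β))/(2k(4αk+β)). -/

import Mathlib

noncomputable def f (k d : ℝ) : ℝ := if d ≤ 2*k then d*(2*k - d/2) else 2*k^2

theorem stmt7 (α β k A₀ : ℝ) (hα : 0 < α) (hβ : 0 < β) (hk : 0 < k) (hA : 0 < A₀)
    (γ : ℝ) (hγ : γ = (4*α*k + β + Real.sqrt ((4*α*k+β)*β)) / (2*k*(4*α*k+β)))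
    (σ : ℝ) (hσ : σ = α*γ + β*γ^2/(4*k*γ - 2)) :
    ∀ L T₀ : ℝ, 0 < L → 0 < T₀ → A₀ ≤ T₀ * f k (L/T₀) → σ*A₀ ≤ α*L + β*T₀ := by
  set s : ℝ := Real.sqrt ((4*α*k+β)*β) with hsdef
  have hcpos : (0:ℝ) < 4*α*k+β := by positivity
  have hspos : 0 < s := Real.sqrt_pos.mpr (by positivity)
  have hs2 : s^2 = (4*α*k+β)*β := Real.sq_sqrt (by positivity)
  have h4kγ : 4*k*γ - 2 = 2*s/(4*α*k+β) := by
    rw [hγ]; field_simp; ring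
  have hσ' : σ = ((4*α*k+β)+s)^2/(8*k^2*(4*α*k+β)) := by
    rw [hσ, h4kγ, hγ]
    field_simp
    ring_nf
    linear_combination (-8) * hs2
  have hσpos : 0 < σ := by rw [hσ']; positivity
  have hkey : (2*σ*k - α)^2 = 2*σ*β := by
    rw [hσ']
    field_simp
    ring_nf
    linear_combination (4*s^2 + (64*α*k+16*β)*s + (112*α*k*β + 256*α^2*k^2 + 12*β^2)) * hs2
  intro L T₀ hL hT hA₀
  have hd : 0 < L/T₀ := by positivity
  have hfd : σ * f k (L/T₀) ≤ α*(L/T₀) + β := by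
    set d := L/T₀
    unfold f
    split_ifs with h
    · nlinarith [sq_nonneg (σ*d - (2*σ*k - α)), hσpos, hkey]
    · push_neg at h
      have h2k : 0 < α * (d - 2*k) := mul_pos hα (by linarith)
      nlinarith [hkey, hσpos, sq_nonneg α, h2k]
  have h1 : σ*A₀ ≤ σ * (T₀ * f k (L/T₀)) :=
    mul_le_mul_of_nonneg_left hA₀ hσpos.le
  have h2 : T₀ * (σ * f k (L/T₀)) ≤ T₀ * (α*(L/T₀) + β) :=
    mul_le_mul_of_nonneg_left hfd hT.le
  have h3 : T₀ * (α*(L/T₀) + β) = α*L + β*T₀ := by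
    field_simp
  nlinarith [h1, h2, h3]
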